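/- Fix 1 < α < 2 and z ∈ ℝ^M, and suppose all coordinates of p* := α-Entmax(z) are strictly positive (i.e., κ = M). Let τ ∈ ℝ be the threshold satisfying p*_i = [(α−1) z_i − τ]^{1/(α−1)} for all i. Then τ/(α−1) ≥ (1/M) ∑_{i=1}^M z_i − M^{1−α}/(α−1) ≥ z_{(M)} − M^{1−α}/(α−1), where z_{(M)} = min_i z_i. Equivalently, Hölder’s inequality with exponents p = 1/(α−1) and q = 1/(2−α) yields M^{2−α} ≥ (α−1) ∑_{i=1}^M z_i − M τ. -/
import Mathlib


open scoped BigOperators Classical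

/-- Tsallis entropy `Ψ_α(p) = (1/(α(α−1))) ∑ᵢ (pᵢ − pᵢ^α)` (for `α > 1`). -/
noncomputable def tsallis (α : ℝ) {M : ℕ} (p : Fin M → ℝ) : ℝ :=
  (1 / (α * (α - 1))) * ∑ i, (p i - p i ^ α)

/-- The objective `p ↦ ⟨p, z⟩ − Ψ_α(p)` whose maximizer over the simplex is `α-Entmax(z)`. -/
noncomputable def entmaxObj (α : ℝ) {M : ℕ} (z p : Fin M → ℝ) : ℝ :=
  (∑ i, p i * z i) - tsallis α p

/-- The `k`-th largest coordinate (1-indexed) of `z ∈ ℝ^M`. -/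
noncomputable def kthLargest {M : ℕ} (z : Fin M → ℝ) (k : ℕ) : ℝ :=
  if h : M - k < M then z (Tuple.sort z ⟨M - k, h⟩) else 0

/-- Threshold lower bound for fully supported `α-Entmax`, `1 < α < 2`: if all coordinates of
`p* = α-Entmax(z)` are strictly positive with threshold `τ` (so `p*ᵢ = ((α−1)zᵢ − τ)^{1/(α−1)}`),
then `τ/(α−1) ≥ (1/M)∑ᵢ zᵢ − M^{1−α}/(α−1) ≥ z_{(M)} − M^{1−α}/(α−1)`; equivalently (via
Hölder's inequality) `M^{2−α} ≥ (α−1)∑ᵢ zᵢ − Mτ`. -/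
theorem entmax_threshold_lower_bound_full_support
    {M : ℕ} (hM : 0 < M)
    (α : ℝ) (hα1 : 1 < α) (hα2 : α < 2)
    (z : Fin M → ℝ)
    (p : Fin M → ℝ) (hp : p ∈ stdSimplex ℝ (Fin M))
    (hpmax : IsMaxOn (entmaxObj α z) (stdSimplex ℝ (Fin M)) p)
    (hpos : ∀ i, 0 < p i)
    (τ : ℝ) (hτ : ∀ i, p i = ((α - 1) * z i - τ) ^ (1 / (α - 1))) :
    τ / (α - 1) ≥ (1 / (M : ℝ)) * (∑ i, z i) - (M : ℝ) ^ (1 - α) / (α - 1) ∧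
    (1 / (M : ℝ)) * (∑ i, z i) - (M : ℝ) ^ (1 - α) / (α - 1) ≥
      kthLargest z M - (M : ℝ) ^ (1 - α) / (α - 1) ∧
    (M : ℝ) ^ (2 - α) ≥ (α - 1) * (∑ i, z i) - (M : ℝ) * τ := by
  have hα0 : (0:ℝ) < α - 1 := by linarith
  have hMR : (0:ℝ) < (M:ℝ) := by exact_mod_cast hM
  have hpsum : ∑ i, p i = 1 := hp.2
  -- each term bound
  have hterm : ∀ i, (α - 1) * z i - τ ≤ p i ^ (α - 1) := by
    intro i
    rcases le_or_gt ((α - 1) * z i - τ) 0 with h | h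
    · exact h.trans (Real.rpow_nonneg (hpos i).le _)
    · have : p i ^ (α - 1) = (α - 1) * z i - τ := by
        rw [hτ i, ← Real.rpow_mul h.le, one_div_mul_cancel (ne_of_gt hα0), Real.rpow_one]
      rw [this]
  -- Jensen: ∑ p_i^{α-1} ≤ M^{2-α}
  have hjensen : ∑ i, p i ^ (α - 1) ≤ (M:ℝ) ^ (2 - α) := by
    set w : Fin M → ℝ := fun _ => 1 / (M:ℝ) with hw
    have hwsum : ∑ i : Fin M, w i = 1 := by
      simp [hw, Finset.sum_const, Finset.card_univ]
      field_simp
    have hpge : (1:ℝ) ≤ 1 / (α - 1) := by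
      rw [le_div_iff₀ hα0]; linarith
    have key := Real.rpow_arith_mean_le_arith_mean_rpow Finset.univ w
      (fun i => p i ^ (α - 1)) (fun i _ => by positivity) hwsum
      (fun i _ => Real.rpow_nonneg (hpos i).le _) hpge
    have hsimp : ∀ i : Fin M, (p i ^ (α - 1)) ^ (1 / (α - 1)) = p i := by
      intro i
      rw [← Real.rpow_mul (hpos i).le, mul_one_div_cancel (ne_of_gt hα0), Real.rpow_one]
    have key2 : (∑ i : Fin M, w i * p i ^ (α - 1)) ^ (1 / (α - 1)) ≤ 1 / (M:ℝ) := by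
      calc (∑ i : Fin M, w i * p i ^ (α - 1)) ^ (1 / (α - 1))
          ≤ ∑ i : Fin M, w i * (p i ^ (α - 1)) ^ (1 / (α - 1)) := key
        _ = ∑ i : Fin M, w i * p i := by simp_rw [hsimp]
        _ = 1 / (M:ℝ) := by
            simp only [hw]
            rw [← Finset.mul_sum, hpsum, mul_one]
    have hx0 : 0 ≤ ∑ i : Fin M, w i * p i ^ (α - 1) := by
      apply Finset.sum_nonneg; intro i _
      exact mul_nonneg (by positivity) (Real.rpow_nonneg (hpos i).le _)
    have key3 : ∑ i : Fin M, w i * p i ^ (α - 1) ≤ (1 / (M:ℝ)) ^ (α - 1) := by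
      calc ∑ i : Fin M, w i * p i ^ (α - 1)
          = ((∑ i : Fin M, w i * p i ^ (α - 1)) ^ (1 / (α - 1))) ^ (α - 1) := by
            rw [← Real.rpow_mul hx0, one_div_mul_cancel (ne_of_gt hα0), Real.rpow_one]
        _ ≤ (1 / (M:ℝ)) ^ (α - 1) :=
            Real.rpow_le_rpow (Real.rpow_nonneg hx0 _) key2 hα0.le
    have hsum_eq : ∑ i : Fin M, w i * p i ^ (α - 1)
        = (1 / (M:ℝ)) * ∑ i, p i ^ (α - 1) := by
      rw [Finset.mul_sum]
    rw [hsum_eq] at key3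
    have hpow : (M:ℝ) * (1 / (M:ℝ)) ^ (α - 1) = (M:ℝ) ^ (2 - α) := by
      rw [one_div, ← Real.rpow_neg_one, ← Real.rpow_mul hMR.le]
      nth_rewrite 1 [show (M:ℝ) = (M:ℝ) ^ (1:ℝ) from (Real.rpow_one _).symm]
      rw [← Real.rpow_add hMR]
      congr 1
      ring
    calc ∑ i, p i ^ (α - 1) = (M:ℝ) * ((1 / (M:ℝ)) * ∑ i, p i ^ (α - 1)) := by
          field_simp
      _ ≤ (M:ℝ) * (1 / (M:ℝ)) ^ (α - 1) := mul_le_mul_of_nonneg_left key3 hMR.le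
      _ = (M:ℝ) ^ (2 - α) := hpow
  -- claim 3
  have claim3 : (α - 1) * (∑ i, z i) - (M:ℝ) * τ ≤ (M:ℝ) ^ (2 - α) := by
    have h1 : ∑ i, ((α - 1) * z i - τ) ≤ ∑ i, p i ^ (α - 1) :=
      Finset.sum_le_sum fun i _ => hterm i
    have h2 : ∑ i, ((α - 1) * z i - τ) = (α - 1) * (∑ i, z i) - (M:ℝ) * τ := by
      rw [Finset.sum_sub_distrib, ← Finset.mul_sum, Finset.sum_const, Finset.card_univ,
        Fintype.card_fin, nsmul_eq_mul]
    linarith [h1.trans hjensen]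
  -- M^{2-α} = M * M^{1-α}
  have hsplit : (M:ℝ) ^ (2 - α) = (M:ℝ) * (M:ℝ) ^ (1 - α) := by
    rw [show (2:ℝ) - α = 1 + (1 - α) by ring, Real.rpow_add hMR, Real.rpow_one]
  -- claim 1
  have claim1 : τ / (α - 1) ≥ (1 / (M : ℝ)) * (∑ i, z i) - (M : ℝ) ^ (1 - α) / (α - 1) := by
    rw [ge_iff_le, ← sub_nonneg]
    have e : τ / (α - 1) - ((1 / (M : ℝ)) * (∑ i, z i) - (M : ℝ) ^ (1 - α) / (α - 1))
        = ((M:ℝ) * (M:ℝ) ^ (1 - α) - ((α - 1) * (∑ i, z i) - (M:ℝ) * τ)) / ((M:ℝ) * (α - 1)) := by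
      field_simp
      ring
    rw [e]
    apply div_nonneg _ (by positivity)
    rw [← hsplit]
    linarith
  -- claim 2 : mean ≥ min
  have claim2 : (1 / (M : ℝ)) * (∑ i, z i) ≥ kthLargest z M := by
    have hk : kthLargest z M = z (Tuple.sort z ⟨0, hM⟩) := by
      simp [kthLargest, Nat.sub_self, hM]
    rw [hk, ge_iff_le, ← sub_nonneg]
    have hmin : ∀ i, z (Tuple.sort z ⟨0, hM⟩) ≤ z i := by
      intro i
      have hmono := Tuple.monotone_sort z
      have h0 := hmono (a := ⟨0, hM⟩) (b := (Tuple.sort z).symm i)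
        (Fin.mk_le_of_le_val (Nat.zero_le _))
      simpa using h0
    have hsum : (M:ℝ) * z (Tuple.sort z ⟨0, hM⟩) ≤ ∑ i, z i := by
      calc (M:ℝ) * z (Tuple.sort z ⟨0, hM⟩)
          = ∑ _i : Fin M, z (Tuple.sort z ⟨0, hM⟩) := by
            rw [Finset.sum_const, Finset.card_univ, Fintype.card_fin, nsmul_eq_mul]
        _ ≤ ∑ i, z i := Finset.sum_le_sum fun i _ => hmin i
    have e2 : (1 / (M : ℝ)) * (∑ i, z i) - z (Tuple.sort z ⟨0, hM⟩)
        = ((∑ i, z i) - (M:ℝ) * z (Tuple.sort z ⟨0, hM⟩)) / (M:ℝ) := by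
      field_simp
    rw [e2]
    apply div_nonneg _ hMR.le
    linarith
  exact ⟨claim1, by linarith [claim2], claim3⟩
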